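/- There exists a constant C > 0 such that for every r ∈ R, ‖B r‖_H ≤ C ‖B r‖_Y, where ‖B r‖_Y = inf{‖B r'‖_H + ‖s‖_S : r' ∈ R, s ∈ S, B r = B r' + ι s}. Equivalently: there is C > 0 such that for all r, r' ∈ R and s ∈ S with B r = B r' + ι s, one has ‖B r‖_H ≤ C (‖B r'‖_H + ‖s‖_S). (Paper's Lemma 2.3.) -/
import Mathlib


/-- Paper's Lemma 2.3.  With `Y = B(R) + ι(S)`, `‖y‖_Y = inf {‖B r‖ + ‖s‖ | y = B r + ι s}`,
there is `C > 0` such that `‖B r‖_H ≤ C ‖B r‖_Y` for every `r ∈ R`; equivalently,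
`‖B r‖_H ≤ C (‖B r'‖_H + ‖s‖_S)` whenever `B r = B r' + ι s`. -/
theorem norm_H_le_norm_Y_on_range
    {R S H : Type*}
    [NormedAddCommGroup R] [InnerProductSpace ℝ R] [CompleteSpace R]
    [NormedAddCommGroup S] [InnerProductSpace ℝ S] [CompleteSpace S]
    [NormedAddCommGroup H] [InnerProductSpace ℝ H] [CompleteSpace H]
    (ι : S →L[ℝ] H) (hι : Function.Injective ι)
    (B : R →L[ℝ] H) :
    ∃ C : ℝ, 0 < C ∧
      (∀ r : R,
        ‖B r‖ ≤ C * sInf {t : ℝ | ∃ (r' : R) (s : S), B r = B r' + ι s ∧ t = ‖B r'‖ + ‖s‖}) ∧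
      (∀ (r r' : R) (s : S), B r = B r' + ι s → ‖B r‖ ≤ C * (‖B r'‖ + ‖s‖)) := by
  set C : ℝ := ‖ι‖ + 1 with hC
  have hCpos : 0 < C := by positivity
  have key : ∀ (r r' : R) (s : S), B r = B r' + ι s → ‖B r‖ ≤ C * (‖B r'‖ + ‖s‖) := by
    intro r r' s h
    calc ‖B r‖ = ‖B r' + ι s‖ := by rw [h]
      _ ≤ ‖B r'‖ + ‖ι s‖ := norm_add_le _ _
      _ ≤ ‖B r'‖ + ‖ι‖ * ‖s‖ := by
          gcongr; exact ι.le_opNorm s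
      _ ≤ C * (‖B r'‖ + ‖s‖) := by
          have h1 : (0:ℝ) ≤ ‖ι‖ := norm_nonneg _
          have h2 : (0:ℝ) ≤ ‖B r'‖ := norm_nonneg _
          have h3 : (0:ℝ) ≤ ‖s‖ := norm_nonneg _
          nlinarith
  refine ⟨C, hCpos, ?_, key⟩
  intro r
  rw [mul_comm, ← div_le_iff₀ hCpos]
  refine le_csInf ⟨‖B r‖ + ‖(0:S)‖, ?_⟩ ?_
  · exact ⟨r, 0, by simp, rfl⟩
  rintro t ⟨r', s, h, rfl⟩
  rw [div_le_iff₀ hCpos, mul_comm]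
  exact key r r' s h
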